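/- Exponential decay of the rotational component in the pursuit mode: suppose κᶜ(t) ≡ 0 (with κᵖ arbitrary) and u solves the relative guidance-by-repulsion equation on [t₀, ∞) with u(t) ≠ 0 for all t. Then d/dt (u(t)^⊥ · u'(t)) = −ν (u(t)^⊥ · u'(t)) for all t ≥ t₀, and hence u(t)^⊥ · u'(t) = e^{−ν(t − t₀)} (u(t₀)^⊥ · u'(t₀)) for all t ≥ t₀. -/

import Mathlib

open Real Filter MeasureTheory intervalIntegral
open scoped RealInnerProductSpace Topology

noncomputable section

/-- Perpendicular rotation in the plane: `(a, b)^⊥ = (-b, a)`. -/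
def perp (w : EuclideanSpace ℝ (Fin 2)) : EuclideanSpace ℝ (Fin 2) :=
  (WithLp.equiv 2 (Fin 2 → ℝ)).symm ![-(w 1), w 0]

/-- The relative guidance-by-repulsion equation
`u'' + (κᵖ(t) f_d(|u|) − f_e(|u|)) u + ν u' = κᶜ(t) u^⊥` holds at time `t`. -/
def SolvesRel (fd fe : ℝ → ℝ) (ν : ℝ) (κp κc : ℝ → ℝ)
    (u : ℝ → EuclideanSpace ℝ (Fin 2)) (t : ℝ) : Prop :=
  deriv (deriv u) t + (κp t * fd ‖u t‖ - fe ‖u t‖) • u t + ν • deriv u t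
    = κc t • perp (u t)

/-- Exponential decay of the rotational component in the pursuit mode:
with `κᶜ ≡ 0`, the quantity `u^⊥ · u'` satisfies `d/dt (u^⊥·u') = −ν (u^⊥·u')` and hence
decays exactly exponentially from its value at `t₀`. -/
theorem rotational_component_exponential_decay
    (fd fe : ℝ → ℝ) (rp γm : ℝ) (hrp : 0 < rp) (hγm : 0 < γm)
    (hfd_lip : LocallyLipschitzOn (Set.Ioi (0:ℝ)) fd)
    (hfe_lip : LocallyLipschitzOn (Set.Ioi (0:ℝ)) fe)
    (hf_neg : ∀ r : ℝ, 0 < r → r < rp → fd r - fe r < 0)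
    (hf_nonneg : ∀ r : ℝ, rp ≤ r → 0 ≤ fd r - fe r)
    (hf_deriv : 0 < deriv (fun r => fd r - fe r) rp)
    (hfd_nonneg : ∀ r : ℝ, 0 < r → 0 ≤ fd r)
    (hfd_bdd : ∃ C : ℝ, ∀ r : ℝ, 0 < r → fd r ≤ C)
    (hfd_lim : Filter.Tendsto fd Filter.atTop (nhds γm))
    (hfe_nonneg : ∀ r : ℝ, 0 < r → 0 ≤ fe r)
    (hfe_div : ¬ MeasureTheory.IntegrableOn (fun r => r * fe r) (Set.Ioc 0 rp))
    (hfe_lim : Filter.Tendsto fe Filter.atTop (nhds 0))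
    (ν : ℝ) (hν : 0 < ν) (κp : ℝ → ℝ) (t0 : ℝ)
    (u : ℝ → EuclideanSpace ℝ (Fin 2)) (hu : ContDiff ℝ 2 u)
    (hsol : ∀ t : ℝ, t0 ≤ t → SolvesRel fd fe ν κp (fun _ => 0) u t)
    (hne : ∀ t : ℝ, t0 ≤ t → u t ≠ 0) :
    (∀ t : ℝ, t0 ≤ t →
      HasDerivAt (fun s => (inner ℝ (perp (u s)) (deriv u s) : ℝ))
        (-ν * (inner ℝ (perp (u t)) (deriv u t) : ℝ)) t) ∧
    (∀ t : ℝ, t0 ≤ t →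
      (inner ℝ (perp (u t)) (deriv u t) : ℝ)
        = Real.exp (-ν * (t - t0)) * (inner ℝ (perp (u t0)) (deriv u t0) : ℝ)) := by

  classical
  have hud : Differentiable ℝ u := hu.differentiable (by norm_num)
  have hud' : Differentiable ℝ (deriv u) :=
    ((contDiff_succ_iff_deriv.mp
      (by exact_mod_cast hu : ContDiff ℝ ((1:ℕ)+1) u)).2.2).differentiable (by simp)
  set ω : ℝ → ℝ := fun s => (inner ℝ (perp (u s)) (deriv u s) : ℝ) with hω
  have hωeq : ∀ s, ω s = u s 0 * deriv u s 1 - u s 1 * deriv u s 0 := by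
    intro s
    simp [hω, perp, PiLp.inner_apply, Fin.sum_univ_two, RCLike.inner_apply]
    ring
  have hproj : ∀ (i : Fin 2) (t : ℝ), HasDerivAt (fun s => u s i) (deriv u t i) t := by
    intro i t
    exact (EuclideanSpace.proj (𝕜 := ℝ) i).hasFDerivAt.comp_hasDerivAt t (hud t).hasDerivAt
  have hproj' : ∀ (i : Fin 2) (t : ℝ),
      HasDerivAt (fun s => deriv u s i) (deriv (deriv u) t i) t := by
    intro i t
    exact (EuclideanSpace.proj (𝕜 := ℝ) i).hasFDerivAt.comp_hasDerivAt t (hud' t).hasDerivAt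
  have key : ∀ t : ℝ, t0 ≤ t → HasDerivAt ω (-ν * ω t) t := by
    intro t ht
    have heq : deriv (deriv u) t
        = -((κp t * fd ‖u t‖ - fe ‖u t‖) • u t) - ν • deriv u t := by
      have := hsol t ht
      simp only [SolvesRel, zero_smul] at this
      linear_combination (norm := module) this
    have hcomp : ∀ i : Fin 2, deriv (deriv u) t i
        = -((κp t * fd ‖u t‖ - fe ‖u t‖) * u t i) - ν * deriv u t i := by
      intro i; rw [heq]; simp
    have h1 : HasDerivAt (fun s => u s 0 * deriv u s 1 - u s 1 * deriv u s 0)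
        ((deriv u t 0 * deriv u t 1 + u t 0 * deriv (deriv u) t 1)
          - (deriv u t 1 * deriv u t 0 + u t 1 * deriv (deriv u) t 0)) t :=
      ((hproj 0 t).mul (hproj' 1 t)).sub ((hproj 1 t).mul (hproj' 0 t))
    have h2 : HasDerivAt ω
        ((deriv u t 0 * deriv u t 1 + u t 0 * deriv (deriv u) t 1)
          - (deriv u t 1 * deriv u t 0 + u t 1 * deriv (deriv u) t 0)) t := by
      refine h1.congr_of_eventuallyEq ?_
      filter_upwards with s using (hωeq s).symm ▸ rfl
    convert h2 using 1
    rw [hcomp 0, hcomp 1, hωeq t]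
    ring
  constructor
  · exact key
  · intro t ht
    set g : ℝ → ℝ := fun s => Real.exp (ν * (s - t0)) * ω s with hg
    have hgd : ∀ s : ℝ, t0 ≤ s → HasDerivAt g 0 s := by
      intro s hs
      have he : HasDerivAt (fun r => Real.exp (ν * (r - t0))) (ν * Real.exp (ν * (s - t0))) s := by
        have : HasDerivAt (fun r => ν * (r - t0)) ν s := by
          simpa using ((hasDerivAt_id s).sub_const t0).const_mul ν
        simpa [mul_comm] using this.exp
      have : HasDerivAt (fun r => Real.exp (ν * (r - t0)) * ω r)
          (ν * Real.exp (ν * (s - t0)) * ω s + Real.exp (ν * (s - t0)) * (-ν * ω s)) s :=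
        he.mul (key s hs)
      convert this using 1
      ring
    have hωcont : Continuous ω := by
      have h0 : ∀ i : Fin 2, Continuous fun s => u s i := fun i =>
        (EuclideanSpace.proj (𝕜 := ℝ) i).continuous.comp hud.continuous
      have h1 : ∀ i : Fin 2, Continuous fun s => deriv u s i := fun i =>
        (EuclideanSpace.proj (𝕜 := ℝ) i).continuous.comp hud'.continuous
      have : Continuous fun s => u s 0 * deriv u s 1 - u s 1 * deriv u s 0 :=
        ((h0 0).mul (h1 1)).sub ((h0 1).mul (h1 0))
      refine this.congr fun s => (hωeq s).symm
    have hgc : Continuous g := (Real.continuous_exp.comp (by continuity)).mul hωcont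
    have hconst : g t = g t0 := by
      have := constant_of_has_deriv_right_zero (f := g) (a := t0) (b := t)
        (hgc.continuousOn)
        (fun x hx => ((hgd x hx.1).hasDerivWithinAt))
        t ⟨ht, le_rfl⟩
      exact this
    have hωt : Real.exp (ν * (t - t0)) * ω t = ω t0 := by
      simpa [hg] using hconst
    have hexp : Real.exp (ν * (t - t0)) ≠ 0 := (Real.exp_pos _).ne'
    rw [neg_mul, Real.exp_neg, eq_comm, inv_mul_eq_iff_eq_mul₀ hexp]; exact hωt.symm
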